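/- Let ABC be a nondegenerate, non-equilateral triangle in the Euclidean plane with circumcenter O, circumradius R, inradius r and semiperimeter s; let G be its centroid and I its incenter. Then cos∠GOI = (6R² − s² − r² + 2Rr)/(2·√(9R² − 2s² + 2r² + 8Rr)·√(R² − 2Rr)). -/

import Mathlib

open EuclideanGeometry
open scoped RealInnerProductSpace
open Matrix

set_option maxHeartbeats 1000000 in
/-- in a nondegenerate non-equilateral triangle with circumcenter `O`,
circumradius `R`, inradius `r`, semiperimeter `s`, centroid `G` and incenter `I`,
`cos ∠GOI = (6R² − s² − r² + 2Rr)/(2·√(9R² − 2s² + 2r² + 8Rr)·√(R² − 2Rr))`. -/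
theorem stmt_16 (A B C O G I : EuclideanSpace ℝ (Fin 2)) (a b c s S R r : ℝ)
    (hABC : AffineIndependent ℝ ![A, B, C])
    (ha : a = dist B C) (hb : b = dist C A) (hc : c = dist A B)
    (hs : s = (a + b + c) / 2)
    (hS : S = Real.sqrt (s * (s - a) * (s - b) * (s - c)))
    (hr : r = S / s)
    (hOA : dist O A = R) (hOB : dist O B = R) (hOC : dist O C = R)
    (hG : ∀ M : EuclideanSpace ℝ (Fin 2),
      ((1 : ℝ) + 1 + 1) • (G - M) = (1 : ℝ) • (A - M) + (1 : ℝ) • (B - M) + (1 : ℝ) • (C - M))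
    (hI : ∀ M : EuclideanSpace ℝ (Fin 2),
      (a + b + c) • (I - M) = a • (A - M) + b • (B - M) + c • (C - M))
    (hne : ¬(a = b ∧ b = c)) :
    Real.cos (∠ G O I) =
      (6 * R ^ 2 - s ^ 2 - r ^ 2 + 2 * R * r) /
        (2 * Real.sqrt (9 * R ^ 2 - 2 * s ^ 2 + 2 * r ^ 2 + 8 * R * r) *
          Real.sqrt (R ^ 2 - 2 * R * r)) := by
  have hAB : A ≠ B := hABC.injective.ne (show (0:Fin 3) ≠ 1 by decide)
  have hBC : B ≠ C := hABC.injective.ne (show (1:Fin 3) ≠ 2 by decide)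
  have hCA : C ≠ A := hABC.injective.ne (show (2:Fin 3) ≠ 0 by decide)
  have ha0 : 0 < a := ha ▸ dist_pos.2 hBC
  have hb0 : 0 < b := hb ▸ dist_pos.2 hCA
  have hc0 : 0 < c := hc ▸ dist_pos.2 hAB
  have hR0 : 0 < R := by
    rcases lt_or_eq_of_le (hOA ▸ dist_nonneg) with h | h
    · exact h
    · exfalso; apply hAB
      have h1 : O = A := by rw [← dist_le_zero, hOA, ← h]
      have h2 : O = B := by rw [← dist_le_zero, hOB, ← h]
      rw [← h1, h2]
  have hs0 : 0 < s := by rw [hs]; linarith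
  -- vectors
  set x := A - O with hxdef
  set y := B - O with hydef
  set z := C - O with hzdef
  have hx : ‖x‖ = R := by rw [hxdef, ← hOA, dist_eq_norm, norm_sub_rev]
  have hy : ‖y‖ = R := by rw [hydef, ← hOB, dist_eq_norm, norm_sub_rev]
  have hz : ‖z‖ = R := by rw [hzdef, ← hOC, dist_eq_norm, norm_sub_rev]
  have hxx : ⟪x, x⟫ = R^2 := by rw [real_inner_self_eq_norm_sq, hx]
  have hyy : ⟪y, y⟫ = R^2 := by rw [real_inner_self_eq_norm_sq, hy]
  have hzz : ⟪z, z⟫ = R^2 := by rw [real_inner_self_eq_norm_sq, hz]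
  have hxy : ⟪x, y⟫ = R^2 - c^2/2 := by
    have h1 : ‖x - y‖ = c := by rw [hc, dist_eq_norm]; congr 1; rw [hxdef, hydef]; abel
    have h2 := norm_sub_sq_real x y
    rw [h1, hx, hy] at h2; linarith
  have hyz : ⟪y, z⟫ = R^2 - a^2/2 := by
    have h1 : ‖y - z‖ = a := by rw [ha, dist_eq_norm]; congr 1; rw [hydef, hzdef]; abel
    have h2 := norm_sub_sq_real y z
    rw [h1, hy, hz] at h2; linarith
  have hxz : ⟪x, z⟫ = R^2 - b^2/2 := by
    have h1 : ‖x - z‖ = b := by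
      rw [hb, dist_comm, dist_eq_norm]; congr 1; rw [hxdef, hzdef]; abel
    have h2 := norm_sub_sq_real x z
    rw [h1, hx, hz] at h2; linarith
  -- Gram determinant: the three vectors are linearly dependent in dimension 2
  have hkey : R^2 * (2*a^2*b^2 + 2*b^2*c^2 + 2*c^2*a^2 - a^4 - b^4 - c^4) = a^2*b^2*c^2 := by
    have hdep : ¬ LinearIndependent ℝ ![x, y, z] := by
      intro h
      have h1 := h.fintype_card_le_finrank
      simp [finrank_euclideanSpace] at h1
    obtain ⟨g, hg, i, hi⟩ := Fintype.not_linearIndependent_iff.1 hdep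
    have hsum : g 0 • x + g 1 • y + g 2 • z = 0 := by
      simpa [Fin.sum_univ_three] using hg
    set M : Matrix (Fin 3) (Fin 3) ℝ :=
      !![R^2, R^2 - c^2/2, R^2 - b^2/2;
         R^2 - c^2/2, R^2, R^2 - a^2/2;
         R^2 - b^2/2, R^2 - a^2/2, R^2] with hM
    have hmv : M *ᵥ ![g 0, g 1, g 2] = 0 := by
      funext j
      have e0 := congrArg (fun v => ⟪x, v⟫) hsum
      have e1 := congrArg (fun v => ⟪y, v⟫) hsum
      have e2 := congrArg (fun v => ⟪z, v⟫) hsum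
      simp only [inner_add_right, real_inner_smul_right, inner_zero_right,
        hxx, hyy, hzz, hxy, hyz, hxz] at e0 e1 e2
      rw [real_inner_comm x y, hxy] at e1
      rw [real_inner_comm x z, hxz, real_inner_comm y z, hyz] at e2
      fin_cases j <;>
        simp [hM, Matrix.mulVec, dotProduct, Fin.sum_univ_three] <;> linarith
    have hdet : M.det = 0 := by
      rw [← Matrix.exists_mulVec_eq_zero_iff]
      refine ⟨![g 0, g 1, g 2], ?_, hmv⟩
      intro h0
      apply hi
      fin_cases i
      · exact congrFun h0 0
      · exact congrFun h0 1
      · exact congrFun h0 2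
    rw [hM, Matrix.det_fin_three] at hdet
    norm_num [Matrix.cons_val_zero, Matrix.cons_val_one, Matrix.cons_val_two, Matrix.tail_cons, Matrix.head_cons] at hdet
    linear_combination 4 * hdet
  -- Heron and basic metric identities
  have hF : 16*(s*(s-a)*(s-b)*(s-c)) = 2*a^2*b^2 + 2*b^2*c^2 + 2*c^2*a^2 - a^4 - b^4 - c^4 := by
    rw [hs]; ring
  have hkey' : R^2 * (16*(s*(s-a)*(s-b)*(s-c))) = (a*b*c)^2 := by
    linear_combination R^2 * hF + hkey
  have hEpos : 0 < s*(s-a)*(s-b)*(s-c) := by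
    have hE : s*(s-a)*(s-b)*(s-c) = (a*b*c)^2/(16*R^2) := by
      rw [eq_div_iff (by positivity)]; linear_combination hkey'
    rw [hE]; positivity
  have hS2 : S^2 = s*(s-a)*(s-b)*(s-c) := by
    rw [hS, Real.sq_sqrt hEpos.le]
  have hSpos : 0 < S := by rw [hS]; exact Real.sqrt_pos.2 hEpos
  have hrs : S = r * s := by rw [hr]; field_simp
  have hr0 : 0 < r := by rw [hr]; exact div_pos hSpos hs0
  have hp : a*b*c = 4*R*S := by
    have h2 : (a*b*c)^2 = (4*R*S)^2 := by linear_combination - hkey' - 16*R^2*hS2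
    have h3 : (0:ℝ) ≤ a*b*c := by positivity
    have h4 : (0:ℝ) ≤ 4*R*S := by positivity
    rw [← Real.sqrt_sq h3, h2, Real.sqrt_sq h4]
  have hp' : a*b*c = 4*R*r*s := by rw [hp, hrs]; ring
  have hq : a*b + b*c + c*a = s^2 + r^2 + 4*R*r := by
    have hq0 : s*(s-a)*(s-b)*(s-c) = r^2*s^2 := by
      linear_combination (S + r*s) * hrs - hS2
    have h5 : s^2 * (a*b + b*c + c*a) = s^2 * (s^2 + r^2 + 4*R*r) := by
      linear_combination hq0 - 2*s^3*hs + s*hp'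
    exact mul_left_cancel₀ (pow_ne_zero 2 hs0.ne') h5
  have hyx : ⟪y, x⟫ = R^2 - c^2/2 := by rw [real_inner_comm]; exact hxy
  have hzy : ⟪z, y⟫ = R^2 - a^2/2 := by rw [real_inner_comm]; exact hyz
  have hzx : ⟪z, x⟫ = R^2 - b^2/2 := by rw [real_inner_comm]; exact hxz
  -- centroid and incenter vectors
  have hGO : (3:ℝ) • (G - O) = x + y + z := by
    have h := hG O
    rw [one_smul, one_smul, one_smul] at h
    rw [hxdef, hydef, hzdef, show (3:ℝ) = 1+1+1 by norm_num]
    exact h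
  have hIO : (2*s) • (I - O) = a • x + b • y + c • z := by
    rw [show (2*s : ℝ) = a + b + c by rw [hs]; ring]
    exact hI O
  -- inner product of the two difference vectors
  have hbig : ⟪x + y + z, a • x + b • y + c • z⟫ =
      (a+b+c)*R^2 + (a+b)*(R^2 - c^2/2) + (b+c)*(R^2 - a^2/2) + (a+c)*(R^2 - b^2/2) := by
    simp only [inner_add_left, inner_add_right, real_inner_smul_right,
      hxx, hyy, hzz, hxy, hyz, hxz, hyx, hzx, hzy]
    ring
  have hGI : ⟪G - O, I - O⟫ = (6*R^2 - s^2 - r^2 + 2*R*r)/6 := by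
    have h1 : ⟪(3:ℝ) • (G - O), (2*s) • (I - O)⟫ = 6*s*⟪G - O, I - O⟫ := by
      rw [real_inner_smul_left, real_inner_smul_right]; ring
    rw [hGO, hIO, hbig] at h1
    have h5 : 6*s*⟪G - O, I - O⟫ = 6*s*((6*R^2 - s^2 - r^2 + 2*R*r)/6) := by
      linear_combination - h1 + ((a*b+b*c+c*a) - 6*R^2)*hs - s*hq + (3/2)*hp'
    have h6 : (6*s : ℝ) ≠ 0 := by positivity
    exact mul_left_cancel₀ h6 h5
  -- norms
  have hGn2 : ‖G - O‖^2 = (9*R^2 - 2*s^2 + 2*r^2 + 8*R*r)/9 := by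
    have h1 : ‖(3:ℝ) • (G - O)‖^2 = 9 * ‖G - O‖^2 := by
      rw [norm_smul]; norm_num; ring
    rw [hGO] at h1
    have h2 : ‖x + y + z‖^2 = ⟪x + y + z, x + y + z⟫ := (real_inner_self_eq_norm_sq _).symm
    simp only [inner_add_left, inner_add_right, hxx, hyy, hzz, hxy, hyz, hxz,
      hyx, hzx, hzy] at h2
    rw [h2] at h1
    have h5 : 9 * ‖G - O‖^2 = 9 * ((9*R^2 - 2*s^2 + 2*r^2 + 8*R*r)/9) := by
      linear_combination - h1 + (4*s + 2*(a+b+c))*hs + 2*hq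
    linarith
  have hIn2 : ‖I - O‖^2 = R^2 - 2*R*r := by
    have h1 : ‖(2*s) • (I - O)‖^2 = (2*s)^2 * ‖I - O‖^2 := by
      rw [norm_smul]; rw [Real.norm_eq_abs, abs_of_pos (by positivity)]; ring
    rw [hIO] at h1
    have h2 : ‖a • x + b • y + c • z‖^2 = ⟪a • x + b • y + c • z, a • x + b • y + c • z⟫ :=
      (real_inner_self_eq_norm_sq _).symm
    simp only [inner_add_left, inner_add_right, real_inner_smul_left, real_inner_smul_right,
      hxx, hyy, hzz, hxy, hyz, hxz, hyx, hzx, hzy] at h2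
    rw [h2] at h1
    have h5 : (2*s)^2 * ‖I - O‖^2 = (2*s)^2 * (R^2 - 2*R*r) := by
      linear_combination - h1 + ((-4*s - 2*(a+b+c))*R^2 + 2*(a*b*c))*hs - 2*s*hp'
    exact mul_left_cancel₀ (by positivity) h5
  -- norms as square roots
  have hGn : ‖G - O‖ = Real.sqrt (9*R^2 - 2*s^2 + 2*r^2 + 8*R*r) / 3 := by
    have h1 : (9*R^2 - 2*s^2 + 2*r^2 + 8*R*r) = (3 * ‖G - O‖)^2 := by
      rw [mul_pow]; rw [hGn2]; ring
    rw [h1, Real.sqrt_sq (by positivity)]; ring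
  have hIn : ‖I - O‖ = Real.sqrt (R^2 - 2*R*r) := by
    have h1 : (R^2 - 2*R*r) = ‖I - O‖^2 := hIn2.symm
    rw [h1, Real.sqrt_sq (norm_nonneg _)]
  -- conclude
  have hcos : Real.cos (∠ G O I) = ⟪G - O, I - O⟫ / (‖G - O‖ * ‖I - O‖) := by
    have : ∠ G O I = InnerProductGeometry.angle (G - O) (I - O) := rfl
    rw [this, InnerProductGeometry.cos_angle]
  rw [hcos, hGI, hGn, hIn]
  rcases eq_or_ne (Real.sqrt (9*R^2 - 2*s^2 + 2*r^2 + 8*R*r) * Real.sqrt (R^2 - 2*R*r)) 0 with h | h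
  · rw [show Real.sqrt (9*R^2 - 2*s^2 + 2*r^2 + 8*R*r) / 3 * Real.sqrt (R^2 - 2*R*r)
        = (Real.sqrt (9*R^2 - 2*s^2 + 2*r^2 + 8*R*r) * Real.sqrt (R^2 - 2*R*r))/3 by ring, h,
        show (2 : ℝ) * Real.sqrt (9*R^2 - 2*s^2 + 2*r^2 + 8*R*r) * Real.sqrt (R^2 - 2*R*r)
        = 2 * (Real.sqrt (9*R^2 - 2*s^2 + 2*r^2 + 8*R*r) * Real.sqrt (R^2 - 2*R*r)) by ring, h]
    simp
  · have h1 : Real.sqrt (9*R^2 - 2*s^2 + 2*r^2 + 8*R*r) ≠ 0 := fun h0 => h (by rw [h0]; ring)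
    have h2 : Real.sqrt (R^2 - 2*R*r) ≠ 0 := fun h0 => h (by rw [h0]; ring)
    field_simp
    ring
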